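/- The unique minimizer θ̂* of L̂_D satisfies θ̂* = θ' + J(X)ᵀ α*, where α* := −(1/λ) ∇_{f^lin(X, θ̂*)} L̂_D ∈ ℝ^{d_out·n} is −(1/λ) times the gradient of the loss part of L̂_D with respect to the stacked linearized model outputs at all training points, evaluated at θ̂*. -/

import Mathlib

open Finset Matrix

noncomputable section

/-- Squared ℓ₂ norm of a finitely-indexed real vector. -/
def sqnorm {ι : Type*} [Fintype ι] (v : ι → ℝ) : ℝ := ∑ i, v i ^ 2

/-- The linearized model `f^lin(x, θ) = f(x, θ') + J(x)(θ - θ')`, where `f0 x = f(x, θ')`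
and `J x` is the Jacobian of `f(x, ·)` at `θ'`. -/
def flin {din dout dθ : ℕ}
    (f0 : (Fin din → ℝ) → Fin dout → ℝ)
    (J : (Fin din → ℝ) → Matrix (Fin dout) (Fin dθ) ℝ)
    (θ' : Fin dθ → ℝ) (xt : Fin din → ℝ) (θ : Fin dθ → ℝ) : Fin dout → ℝ :=
  f0 xt + J xt *ᵥ (θ - θ')

/-- Regularized empirical risk `L̂_S(θ)` of the linearized model over the subset of the
dataset indexed by `S`. -/
def empRisk {din dout dθ n : ℕ}
    (f0 : (Fin din → ℝ) → Fin dout → ℝ)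
    (J : (Fin din → ℝ) → Matrix (Fin dout) (Fin dθ) ℝ)
    (θ' : Fin dθ → ℝ) (X : Fin n → Fin din → ℝ) (Y : Fin n → Fin dout → ℝ)
    (ℓ : (Fin dout → ℝ) → (Fin dout → ℝ) → ℝ) (lam : ℝ)
    (S : Finset (Fin n)) (θ : Fin dθ → ℝ) : ℝ :=
  (S.card : ℝ)⁻¹ * ∑ i ∈ S, (ℓ (flin f0 J θ' (X i) θ) (Y i) + lam / 2 * sqnorm (θ - θ'))

/-- Gradient of the loss `ℓ(·, y)` in its first argument, as a vector. -/
def gradloss {dout : ℕ} (ℓ : (Fin dout → ℝ) → (Fin dout → ℝ) → ℝ)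
    (ytgt u : Fin dout → ℝ) : Fin dout → ℝ :=
  fun a => fderiv ℝ (fun v => ℓ v ytgt) u (Pi.single a 1)

/-- Hessian of the loss `ℓ(·, y)` in its first argument, as a matrix. -/
def hessloss {dout : ℕ} (ℓ : (Fin dout → ℝ) → (Fin dout → ℝ) → ℝ)
    (ytgt u : Fin dout → ℝ) : Fin dout → Fin dout → ℝ :=
  fun a b => fderiv ℝ (fun v => fderiv ℝ (fun w => ℓ w ytgt) v (Pi.single b 1)) u (Pi.single a 1)

/-- Stacked Jacobian `J(X) ∈ ℝ^{d_out·n × d_θ}`, whose `i`-th row block is `J(x_i)`. -/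
def JX {din dout dθ n : ℕ}
    (J : (Fin din → ℝ) → Matrix (Fin dout) (Fin dθ) ℝ)
    (X : Fin n → Fin din → ℝ) : Matrix (Fin n × Fin dout) (Fin dθ) ℝ :=
  fun q p => J (X q.1) q.2 p

/-- Empirical NTK Gram matrix `K = K(X, X) = J(X) J(X)ᵀ`. -/
def Kmat {din dout dθ n : ℕ}
    (J : (Fin din → ℝ) → Matrix (Fin dout) (Fin dθ) ℝ)
    (X : Fin n → Fin din → ℝ) : Matrix (Fin n × Fin dout) (Fin n × Fin dout) ℝ :=
  JX J X * (JX J X)ᵀ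

/-- NTK row block `K(x, X) = J(x) J(X)ᵀ ∈ ℝ^{d_out × d_out·n}`. -/
def KxX {din dout dθ n : ℕ}
    (J : (Fin din → ℝ) → Matrix (Fin dout) (Fin dθ) ℝ)
    (X : Fin n → Fin din → ℝ) (xt : Fin din → ℝ) : Matrix (Fin dout) (Fin n × Fin dout) ℝ :=
  J xt * (JX J X)ᵀ

/-- Reparameterization `φ(Δα) = θ̂* + J(X)ᵀ Δα`. -/
def phi {din dout dθ n : ℕ}
    (J : (Fin din → ℝ) → Matrix (Fin dout) (Fin dθ) ℝ)
    (X : Fin n → Fin din → ℝ) (θstar : Fin dθ → ℝ)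
    (Δα : Fin n × Fin dout → ℝ) : Fin dθ → ℝ :=
  θstar + (JX J X)ᵀ *ᵥ Δα

/-- Reparameterized model `g^lin(x, Δα) = f^lin(x, θ̂*) + K(x, X) Δα`. -/
def glin {din dout dθ n : ℕ}
    (f0 : (Fin din → ℝ) → Fin dout → ℝ)
    (J : (Fin din → ℝ) → Matrix (Fin dout) (Fin dθ) ℝ)
    (θ' : Fin dθ → ℝ) (X : Fin n → Fin din → ℝ) (θstar : Fin dθ → ℝ)
    (xt : Fin din → ℝ) (Δα : Fin n × Fin dout → ℝ) : Fin dout → ℝ :=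
  flin f0 J θ' xt θstar + KxX J X xt *ᵥ Δα

/-- Dual risk `L̃_S(Δα) = (1/|S|) Σ_{(x,y)∈S} ( ℓ(g^lin(x, Δα), y) + (λ/2)‖φ(Δα) − θ'‖₂² )`. -/
def dualRisk {din dout dθ n : ℕ}
    (f0 : (Fin din → ℝ) → Fin dout → ℝ)
    (J : (Fin din → ℝ) → Matrix (Fin dout) (Fin dθ) ℝ)
    (θ' : Fin dθ → ℝ) (X : Fin n → Fin din → ℝ) (Y : Fin n → Fin dout → ℝ)
    (ℓ : (Fin dout → ℝ) → (Fin dout → ℝ) → ℝ) (lam : ℝ) (θstar : Fin dθ → ℝ)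
    (S : Finset (Fin n)) (Δα : Fin n × Fin dout → ℝ) : ℝ :=
  (S.card : ℝ)⁻¹ *
    ∑ i ∈ S, (ℓ (glin f0 J θ' X θstar (X i) Δα) (Y i) +
      lam / 2 * sqnorm (phi J X θstar Δα - θ'))

/-- The dual coefficient vector `Δα_r*` of Proposition 3.1: on the forget indices
(`q.1 ∉ Dr`) it is `(1/λ) ∇_{f^lin(X_f, θ̂*)} L̂_D`, and on the retain indices (`q.1 ∈ Dr`)
it is `−(1/λ)( ∇_{f^lin(X_r, θ̂_r*)} L̂_{D_r} − ∇_{f^lin(X_r, θ̂*)} L̂_D )`. -/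
def dalpha {din dout dθ n : ℕ}
    (f0 : (Fin din → ℝ) → Fin dout → ℝ)
    (J : (Fin din → ℝ) → Matrix (Fin dout) (Fin dθ) ℝ)
    (θ' : Fin dθ → ℝ) (X : Fin n → Fin din → ℝ) (Y : Fin n → Fin dout → ℝ)
    (ℓ : (Fin dout → ℝ) → (Fin dout → ℝ) → ℝ) (lam : ℝ)
    (Dr : Finset (Fin n)) (θstar θrstar : Fin dθ → ℝ) :
    Fin n × Fin dout → ℝ :=
  fun q =>
    if q.1 ∈ Dr then
      -lam⁻¹ * ((Dr.card : ℝ)⁻¹ * gradloss ℓ (Y q.1) (flin f0 J θ' (X q.1) θrstar) q.2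
        - (n : ℝ)⁻¹ * gradloss ℓ (Y q.1) (flin f0 J θ' (X q.1) θstar) q.2)
    else
      lam⁻¹ * ((n : ℝ)⁻¹ * gradloss ℓ (Y q.1) (flin f0 J θ' (X q.1) θstar) q.2)

/-- A continuous linear functional on a finite pi type is determined by its values on the
standard basis vectors. -/
lemma clm_apply_eq_sum {m : ℕ} (D : (Fin m → ℝ) →L[ℝ] ℝ) (w : Fin m → ℝ) :
    D w = ∑ a, w a * D (Pi.single a 1) := by
  have hw : w = ∑ a, w a • (Pi.single a 1 : Fin m → ℝ) := by
    funext b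
    simp [Finset.sum_apply, Pi.single_apply]
  calc D w = D (∑ a, w a • (Pi.single a 1 : Fin m → ℝ)) := by rw [← hw]
    _ = ∑ a, w a * D (Pi.single a 1) := by
        rw [map_sum]; simp [smul_eq_mul]

/-- the unique minimizer `θ̂*` of `L̂_D` satisfies
`θ̂* = θ' + J(X)ᵀ α*` with `α* = −(1/λ) ∇_{f^lin(X, θ̂*)} L̂_D`. -/
theorem stmt_1 {din dout dθ n : ℕ} (hn : 0 < n)
    (f0 : (Fin din → ℝ) → Fin dout → ℝ)
    (J : (Fin din → ℝ) → Matrix (Fin dout) (Fin dθ) ℝ)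
    (θ' : Fin dθ → ℝ) (X : Fin n → Fin din → ℝ) (Y : Fin n → Fin dout → ℝ)
    (ℓ : (Fin dout → ℝ) → (Fin dout → ℝ) → ℝ) (lam : ℝ)
    (hℓ0 : ∀ u ytgt, 0 ≤ ℓ u ytgt)
    (hconv : ∀ ytgt, ConvexOn ℝ Set.univ fun u => ℓ u ytgt)
    (hdiff : ∀ ytgt, Differentiable ℝ fun u => ℓ u ytgt)
    (hlam : 0 < lam)
    (θstar : Fin dθ → ℝ)
    (hmin : ∀ θ : Fin dθ → ℝ,
      empRisk f0 J θ' X Y ℓ lam Finset.univ θstar ≤ empRisk f0 J θ' X Y ℓ lam Finset.univ θ) :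
    θstar = θ' + (JX J X)ᵀ *ᵥ (fun q : Fin n × Fin dout =>
      -lam⁻¹ * ((n : ℝ)⁻¹ * gradloss ℓ (Y q.1) (flin f0 J θ' (X q.1) θstar) q.2)) := by
  classical
  have hn' : (n : ℝ) ≠ 0 := Nat.cast_ne_zero.mpr hn.ne'
  have hlam' : lam ≠ 0 := hlam.ne'
  set L : Fin n → (Fin dθ → ℝ) →L[ℝ] (Fin dout → ℝ) :=
    fun i => LinearMap.toContinuousLinearMap (Matrix.mulVecLin (J (X i))) with hL
  set Dl : Fin n → (Fin dout → ℝ) →L[ℝ] ℝ :=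
    fun i => fderiv ℝ (fun v => ℓ v (Y i)) (flin f0 J θ' (X i) θstar) with hDl
  set Dsq : (Fin dθ → ℝ) →L[ℝ] ℝ :=
    ∑ p : Fin dθ, (2 * (θstar p - θ' p)) •
      (ContinuousLinearMap.proj p : (Fin dθ → ℝ) →L[ℝ] ℝ) with hDsqdef
  have hflin : ∀ i, HasFDerivAt (fun θ => flin f0 J θ' (X i) θ) (L i) θstar := by
    intro i
    have h1 : HasFDerivAt (fun θ : Fin dθ → ℝ => θ - θ')
        (ContinuousLinearMap.id ℝ (Fin dθ → ℝ)) θstar := (hasFDerivAt_id θstar).sub_const θ'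
    have h2 := ((L i).hasFDerivAt).comp θstar h1
    have h3 := h2.const_add (f0 (X i))
    simpa [flin, hL, Function.comp, ContinuousLinearMap.comp_id,
      Matrix.mulVecLin_apply] using h3
  have hsq : HasFDerivAt (fun θ : Fin dθ → ℝ => sqnorm (θ - θ')) Dsq θstar := by
    have hp : ∀ p : Fin dθ, p ∈ Finset.univ →
        HasFDerivAt (fun θ : Fin dθ → ℝ => (θ p - θ' p) ^ 2)
        ((2 * (θstar p - θ' p)) • (ContinuousLinearMap.proj p : (Fin dθ → ℝ) →L[ℝ] ℝ))
        θstar := by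
      intro p _
      have h1 : HasFDerivAt (fun θ : Fin dθ → ℝ => θ p - θ' p)
          (ContinuousLinearMap.proj p : (Fin dθ → ℝ) →L[ℝ] ℝ) θstar :=
        ((ContinuousLinearMap.proj p : (Fin dθ → ℝ) →L[ℝ] ℝ).hasFDerivAt).sub_const (θ' p)
      have h2 := h1.mul h1
      have h3 : (θstar p - θ' p) • (ContinuousLinearMap.proj p : (Fin dθ → ℝ) →L[ℝ] ℝ)
          + (θstar p - θ' p) • (ContinuousLinearMap.proj p : (Fin dθ → ℝ) →L[ℝ] ℝ)
          = (2 * (θstar p - θ' p)) • (ContinuousLinearMap.proj p : (Fin dθ → ℝ) →L[ℝ] ℝ) := by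
        rw [← add_smul]; ring_nf
      have h4 : HasFDerivAt (fun θ : Fin dθ → ℝ => (θ p - θ' p) * (θ p - θ' p))
          ((2 * (θstar p - θ' p)) • (ContinuousLinearMap.proj p : (Fin dθ → ℝ) →L[ℝ] ℝ))
          θstar := by rw [← h3]; exact h2
      simpa [pow_two] using h4
    have h := HasFDerivAt.fun_sum hp
    simpa [sqnorm, hDsqdef] using h
  have hterm : ∀ i : Fin n, HasFDerivAt
      (fun θ => ℓ (flin f0 J θ' (X i) θ) (Y i) + lam / 2 * sqnorm (θ - θ'))
      ((Dl i).comp (L i) + (lam / 2) • Dsq) θstar := by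
    intro i
    have h1 : HasFDerivAt (fun θ => ℓ (flin f0 J θ' (X i) θ) (Y i))
        ((Dl i).comp (L i)) θstar :=
      (((hdiff (Y i)) (flin f0 J θ' (X i) θstar)).hasFDerivAt).comp θstar (hflin i)
    exact h1.add (hsq.const_mul (lam / 2))
  have hF : HasFDerivAt (fun θ => empRisk f0 J θ' X Y ℓ lam Finset.univ θ)
      ((n : ℝ)⁻¹ • ∑ i : Fin n, ((Dl i).comp (L i) + (lam / 2) • Dsq)) θstar := by
    have hsum := HasFDerivAt.sum (u := (Finset.univ : Finset (Fin n))) (fun i _ => hterm i)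
    have h := hsum.const_mul ((n : ℝ)⁻¹)
    simpa [empRisk, Finset.card_univ] using h
  have hmin' : IsLocalMin (fun θ => empRisk f0 J θ' X Y ℓ lam Finset.univ θ) θstar :=
    Filter.Eventually.of_forall hmin
  have hzero := hmin'.hasFDerivAt_eq_zero hF
  funext p
  set G : Fin n → ℝ :=
    fun i => ∑ a, J (X i) a p * gradloss ℓ (Y i) (flin f0 J θ' (X i) θstar) a with hGdef
  have h0 : ((n : ℝ)⁻¹ • ∑ i : Fin n, ((Dl i).comp (L i) + (lam / 2) • Dsq))
      (Pi.single p 1) = 0 := by rw [hzero]; rfl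
  have hLs : ∀ i, (L i) (Pi.single p 1) = fun a => J (X i) a p := by
    intro i; funext a
    simp [hL, Matrix.mulVecLin_apply, Matrix.mulVec, dotProduct, Pi.single_apply, mul_ite]
  have hexp : ∀ i, (Dl i) ((L i) (Pi.single p 1)) = G i := by
    intro i
    rw [hLs i, clm_apply_eq_sum]
    rfl
  have hDsqp : Dsq (Pi.single p 1) = 2 * (θstar p - θ' p) := by
    simp [hDsqdef, Pi.single_apply, mul_ite]
  have h0' : ∑ i : Fin n, (G i + lam / 2 * (2 * (θstar p - θ' p))) = 0 := by
    have h := h0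
    simp only [ContinuousLinearMap.smul_apply, ContinuousLinearMap.sum_apply,
      ContinuousLinearMap.add_apply, ContinuousLinearMap.coe_comp', Function.comp_apply,
      smul_eq_mul, hexp, hDsqp] at h
    exact (mul_eq_zero.mp h).resolve_left (inv_ne_zero hn')
  have hsum0 : (∑ i : Fin n, G i) + (n : ℝ) * (lam * (θstar p - θ' p)) = 0 := by
    have h2 : ∑ i : Fin n, (G i + lam / 2 * (2 * (θstar p - θ' p)))
        = (∑ i : Fin n, G i) + (n : ℝ) * (lam * (θstar p - θ' p)) := by
      rw [Finset.sum_add_distrib, Finset.sum_const, Finset.card_univ, Fintype.card_fin,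
        nsmul_eq_mul]
      ring
    rw [← h2]; exact h0'
  have hrhs : (θ' + (JX J X)ᵀ *ᵥ (fun q : Fin n × Fin dout =>
      -lam⁻¹ * ((n : ℝ)⁻¹ * gradloss ℓ (Y q.1) (flin f0 J θ' (X q.1) θstar) q.2))) p
      = θ' p + (-lam⁻¹ * (n : ℝ)⁻¹) * ∑ i : Fin n, G i := by
    simp only [Pi.add_apply, Matrix.mulVec, dotProduct, Matrix.transpose_apply, JX,
      Fintype.sum_prod_type, hGdef, Finset.mul_sum]
    congr 1
    apply Finset.sum_congr rfl
    intro i _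
    apply Finset.sum_congr rfl
    intro a _
    ring
  rw [hrhs]
  have hGsum : ∑ i : Fin n, G i = -((n : ℝ) * (lam * (θstar p - θ' p))) := by linarith
  rw [hGsum]
  field_simp
  ring
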